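/- Let f : ℝⁿ → ℝⁿ be continuously differentiable with f' Lipschitz with constant L on an open convex set Ω, let x* ∈ Ω, let B_k be a linear map on ℝⁿ, and let x_k, y_k ∈ Ω with y_k ≠ x_k. Define s_k = y_k - x_k, z_k = f(y_k) - f(x_k), and B_{k+1} = B_k + (z_k - B_k s_k) s_kᵀ / ‖s_k‖². Then ‖B_{k+1} - f'(x*)‖ ≤ ‖B_k - f'(x*)‖ + (L/2)(‖y_k - x*‖ + ‖x_k - x*‖). -/

import Mathlib

open Metric

lemma seg_bound {n : ℕ} (Ω : Set (EuclideanSpace ℝ (Fin n)))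
    (hconv : Convex ℝ Ω)
    (f : EuclideanSpace ℝ (Fin n) → EuclideanSpace ℝ (Fin n))
    (f' : EuclideanSpace ℝ (Fin n) → EuclideanSpace ℝ (Fin n) →L[ℝ] EuclideanSpace ℝ (Fin n))
    (hdiff : ∀ x ∈ Ω, HasFDerivAt f (f' x) x)
    (hcont : ContinuousOn f' Ω)
    (L : ℝ) (hL : 0 ≤ L)
    (hLip : ∀ u ∈ Ω, ∀ v ∈ Ω, ‖f' u - f' v‖ ≤ L * ‖u - v‖)
    (xs xk yk : EuclideanSpace ℝ (Fin n)) (hxs : xs ∈ Ω) (hxk : xk ∈ Ω) (hyk : yk ∈ Ω) :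
    ‖f yk - f xk - f' xs (yk - xk)‖ ≤ L / 2 * (‖yk - xs‖ + ‖xk - xs‖) * ‖yk - xk‖ := by
  set s : EuclideanSpace ℝ (Fin n) := yk - xk with hs
  set A := f' xs with hA
  set γ : ℝ → EuclideanSpace ℝ (Fin n) := fun t => xk + t • s with hγ
  have hγ0 : γ 0 = xk := by simp [hγ]
  have hγ1 : γ 1 = yk := by simp [hγ, hs]
  have hγmem : ∀ t ∈ Set.Icc (0:ℝ) 1, γ t ∈ Ω := by
    intro t ht
    have heq : γ t = (1 - t) • xk + t • yk := by
      simp only [hγ, hs]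
      module
    rw [heq]
    exact hconv hxk hyk (by linarith [ht.2]) ht.1 (by ring)
  have hγcont : Continuous γ := by fun_prop
  have hderiv : ∀ t ∈ Set.uIcc (0:ℝ) 1,
      HasDerivAt (fun t => f (γ t) - t • A s) (f' (γ t) s - A s) t := by
    intro t ht
    rw [Set.uIcc_of_le zero_le_one] at ht
    have hγd : HasDerivAt γ s t := by
      simpa [hγ] using ((hasDerivAt_id t).smul_const s).const_add xk
    have h1 : HasDerivAt (fun t => f (γ t)) (f' (γ t) s) t :=
      (hdiff (γ t) (hγmem t ht)).comp_hasDerivAt t hγd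
    have h2 : HasDerivAt (fun t : ℝ => t • A s) (A s) t := by
      simpa using (hasDerivAt_id t).smul_const (A s)
    exact h1.sub h2
  have hcontd : ContinuousOn (fun t => f' (γ t) s - A s) (Set.Icc (0:ℝ) 1) := by
    have h1 : ContinuousOn (fun t => f' (γ t)) (Set.Icc (0:ℝ) 1) :=
      hcont.comp hγcont.continuousOn hγmem
    have h2 : ContinuousOn (fun t => f' (γ t) s) (Set.Icc (0:ℝ) 1) :=
      (ContinuousLinearMap.apply ℝ (EuclideanSpace ℝ (Fin n)) s).continuous.comp_continuousOn h1
    exact h2.sub continuousOn_const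
  have hint : IntervalIntegrable (fun t => f' (γ t) s - A s) MeasureTheory.volume 0 1 :=
    hcontd.intervalIntegrable_of_Icc zero_le_one
  have hFTC := intervalIntegral.integral_eq_sub_of_hasDerivAt hderiv hint
  have heqv : f yk - f xk - A s = ∫ t in (0:ℝ)..1, (f' (γ t) s - A s) := by
    rw [hFTC, hγ1, hγ0]
    simp
    abel
  set a := ‖xk - xs‖ with ha
  set b := ‖yk - xs‖ with hb
  set g : ℝ → ℝ := fun t => L * ((1 - t) * a + t * b) * ‖s‖ with hg
  have hbound : ∀ t ∈ Set.Icc (0:ℝ) 1, ‖f' (γ t) s - A s‖ ≤ g t := by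
    intro t ht
    have h1 : ‖f' (γ t) s - A s‖ ≤ ‖f' (γ t) - A‖ * ‖s‖ := by
      calc ‖f' (γ t) s - A s‖ = ‖(f' (γ t) - A) s‖ := by simp
        _ ≤ ‖f' (γ t) - A‖ * ‖s‖ := (f' (γ t) - A).le_opNorm s
    have h2 : ‖f' (γ t) - A‖ ≤ L * ‖γ t - xs‖ := hLip _ (hγmem t ht) _ hxs
    have h3 : ‖γ t - xs‖ ≤ (1 - t) * a + t * b := by
      have heq : γ t - xs = (1 - t) • (xk - xs) + t • (yk - xs) := by
        simp only [hγ, hs]; module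
      rw [heq]
      calc ‖(1 - t) • (xk - xs) + t • (yk - xs)‖
          ≤ ‖(1 - t) • (xk - xs)‖ + ‖t • (yk - xs)‖ := norm_add_le _ _
        _ = (1 - t) * a + t * b := by
            rw [norm_smul, norm_smul, Real.norm_eq_abs, Real.norm_eq_abs,
              abs_of_nonneg (by linarith [ht.2]), abs_of_nonneg ht.1]
    have h4 : ‖f' (γ t) - A‖ ≤ L * ((1 - t) * a + t * b) :=
      h2.trans (mul_le_mul_of_nonneg_left h3 hL)
    exact h1.trans (mul_le_mul_of_nonneg_right h4 (norm_nonneg s))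
  have hgint : IntervalIntegrable g MeasureTheory.volume 0 1 := by
    apply Continuous.intervalIntegrable
    fun_prop
  have hnorm : ‖∫ t in (0:ℝ)..1, (f' (γ t) s - A s)‖ ≤ |∫ t in (0:ℝ)..1, g t| := by
    apply intervalIntegral.norm_integral_le_abs_of_norm_le _ hgint
    filter_upwards [MeasureTheory.ae_restrict_mem measurableSet_uIoc] with t ht
    apply hbound
    rw [Set.uIoc_of_le zero_le_one] at ht
    exact Set.mem_Icc_of_Ioc ht
  have hgval : ∫ t in (0:ℝ)..1, g t = L / 2 * (b + a) * ‖s‖ := by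
    have : g = fun t => (L * a * ‖s‖) + (L * (b - a) * ‖s‖) * t := by
      funext t; simp only [hg]; ring
    rw [this, intervalIntegral.integral_add (intervalIntegrable_const)
      ((intervalIntegral.intervalIntegrable_id).const_mul _),
      intervalIntegral.integral_const, intervalIntegral.integral_const_mul, integral_id]
    simp; ring
  rw [heqv]
  refine hnorm.trans (le_of_eq ?_)
  rw [hgval, abs_of_nonneg (by positivity)]

open scoped RealInnerProductSpace

theorem stmt_2 {n : ℕ} (Ω : Set (EuclideanSpace ℝ (Fin n))) (hΩ : IsOpen Ω)
    (hconv : Convex ℝ Ω)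
    (f : EuclideanSpace ℝ (Fin n) → EuclideanSpace ℝ (Fin n))
    (f' : EuclideanSpace ℝ (Fin n) → EuclideanSpace ℝ (Fin n) →L[ℝ] EuclideanSpace ℝ (Fin n))
    (hdiff : ∀ x ∈ Ω, HasFDerivAt f (f' x) x)
    (hcont : ContinuousOn f' Ω)
    (L : ℝ) (hL : 0 < L)
    (hLip : ∀ u ∈ Ω, ∀ v ∈ Ω, ‖f' u - f' v‖ ≤ L * ‖u - v‖)
    (xs xk yk : EuclideanSpace ℝ (Fin n)) (hxs : xs ∈ Ω) (hxk : xk ∈ Ω) (hyk : yk ∈ Ω)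
    (hne : yk ≠ xk)
    (Bk : EuclideanSpace ℝ (Fin n) →L[ℝ] EuclideanSpace ℝ (Fin n))
    (sk zk : EuclideanSpace ℝ (Fin n))
    (hsk : sk = yk - xk) (hzk : zk = f yk - f xk)
    (Bk1 : EuclideanSpace ℝ (Fin n) →L[ℝ] EuclideanSpace ℝ (Fin n))
    (hBk1 : Bk1 = Bk + (‖sk‖ ^ 2)⁻¹ • ((innerSL ℝ sk).smulRight (zk - Bk sk))) :
    ‖Bk1 - f' xs‖ ≤ ‖Bk - f' xs‖ + L / 2 * (‖yk - xs‖ + ‖xk - xs‖) := by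
  have hsne : sk ≠ 0 := by rw [hsk]; exact sub_ne_zero.mpr hne
  have hsnorm : (0:ℝ) < ‖sk‖ := norm_pos_iff.mpr hsne
  have key : ‖zk - f' xs sk‖ ≤ L / 2 * (‖yk - xs‖ + ‖xk - xs‖) * ‖sk‖ := by
    rw [hzk, hsk]
    exact seg_bound Ω hconv f f' hdiff hcont L hL.le hLip xs xk yk hxs hxk hyk
  set M := L / 2 * (‖yk - xs‖ + ‖xk - xs‖) with hM
  have hM0 : 0 ≤ M := by positivity
  refine ContinuousLinearMap.opNorm_le_bound _ (by positivity) (fun w => ?_)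
  set c : ℝ := (‖sk‖ ^ 2)⁻¹ with hc
  set t : ℝ := c * ⟪sk, w⟫ with ht
  have hdec : (Bk1 - f' xs) w = (Bk - f' xs) (w - t • sk) + t • (zk - f' xs sk) := by
    simp only [hBk1, ht, hc, ContinuousLinearMap.sub_apply, ContinuousLinearMap.add_apply,
      ContinuousLinearMap.smul_apply, ContinuousLinearMap.smulRight_apply, innerSL_apply_apply,
      map_sub, map_smul, smul_sub]
    module
  have hcsq : c * ‖sk‖ ^ 2 = 1 := by
    rw [hc]; field_simp
  have horth : ‖w - t • sk‖ ≤ ‖w‖ := by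
    have hst : ⟪w - t • sk, t • sk⟫ = 0 := by
      rw [real_inner_smul_right, inner_sub_left, real_inner_smul_left,
        real_inner_self_eq_norm_sq, ← real_inner_comm w sk, ht]
      linear_combination (-(c * ⟪sk, w⟫ * ⟪sk, w⟫)) * hcsq
    have h2 : ‖w‖ ^ 2 = ‖w - t • sk‖ ^ 2 + ‖t • sk‖ ^ 2 := by
      have h3 := norm_add_sq_real (w - t • sk) (t • sk)
      rw [sub_add_cancel, hst] at h3
      linarith
    nlinarith [norm_nonneg (w - t • sk), norm_nonneg w, sq_nonneg ‖t • sk‖]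
  have hts : |t| * ‖sk‖ ≤ ‖w‖ := by
    have hcs : |⟪sk, w⟫| ≤ ‖sk‖ * ‖w‖ := abs_real_inner_le_norm sk w
    rw [ht, abs_mul, hc, abs_of_nonneg (by positivity)]
    rw [pow_two]
    rw [mul_inv]
    calc ‖sk‖⁻¹ * ‖sk‖⁻¹ * |⟪sk, w⟫| * ‖sk‖ ≤ ‖sk‖⁻¹ * ‖sk‖⁻¹ * (‖sk‖ * ‖w‖) * ‖sk‖ := by
          gcongr
      _ = ‖w‖ * (‖sk‖⁻¹ * ‖sk‖) * (‖sk‖⁻¹ * ‖sk‖) := by ring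
      _ = ‖w‖ := by rw [inv_mul_cancel₀ hsnorm.ne']; ring
  calc ‖(Bk1 - f' xs) w‖ = ‖(Bk - f' xs) (w - t • sk) + t • (zk - f' xs sk)‖ := by rw [hdec]
    _ ≤ ‖(Bk - f' xs) (w - t • sk)‖ + ‖t • (zk - f' xs sk)‖ := norm_add_le _ _
    _ ≤ ‖Bk - f' xs‖ * ‖w - t • sk‖ + |t| * ‖zk - f' xs sk‖ := by
        rw [norm_smul, Real.norm_eq_abs]
        exact add_le_add ((Bk - f' xs).le_opNorm _) le_rfl
    _ ≤ ‖Bk - f' xs‖ * ‖w‖ + |t| * (M * ‖sk‖) := by gcongr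
    _ = ‖Bk - f' xs‖ * ‖w‖ + M * (|t| * ‖sk‖) := by ring
    _ ≤ ‖Bk - f' xs‖ * ‖w‖ + M * ‖w‖ := by gcongr
    _ = (‖Bk - f' xs‖ + M) * ‖w‖ := by ring
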